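/- Let X and Y be d×d positive definite Hermitian matrices and P a d×d positive semidefinite Hermitian matrix with P ⪰ X^{-1}, and let P' := P + Y^{-1/2}(I_d − Y^{1/2} P Y^{1/2})_+ Y^{-1/2}. Then ‖P' − P‖_Y ≤ ‖Y − X‖_{X^{-1}}, i.e. Tr((P'−P)Y(P'−P)Y) ≤ Tr((Y−X)X^{-1}(Y−X)X^{-1}). -/

import Mathlib

open Matrix
open scoped ComplexOrder

/-- The positive part `M₊` of a Hermitian matrix: keep the spectral decomposition but set
all negative eigenvalues to zero (junk value `0` if `M` is not Hermitian). -/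
noncomputable def matPosPart {d : ℕ} (M : Matrix (Fin d) (Fin d) ℂ) :
    Matrix (Fin d) (Fin d) ℂ :=
  if hM : M.IsHermitian then
    (hM.eigenvectorUnitary : Matrix (Fin d) (Fin d) ℂ) *
      Matrix.diagonal (fun i => ((max (hM.eigenvalues i) 0 : ℝ) : ℂ)) *
      star (hM.eigenvectorUnitary : Matrix (Fin d) (Fin d) ℂ)
  else 0

lemma aux_trace_re_nonneg {d : ℕ} {W : Matrix (Fin d) (Fin d) ℂ}
    (hW : W.PosSemidef) : 0 ≤ W.trace.re := by
  have h : ∀ i, 0 ≤ (W i i).re := by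
    intro i
    have := hW.re_dotProduct_nonneg (Pi.single i 1)
    simpa [dotProduct, mulVec, Pi.single_apply, Finset.sum_ite_eq] using this
  simpa [Matrix.trace, Matrix.diag, Complex.re_sum] using
    Finset.sum_nonneg fun i _ => h i

lemma aux_trace_sq_mul_re_nonneg {d : ℕ} {C B : Matrix (Fin d) (Fin d) ℂ}
    (hC : C.PosSemidef) (hB : B.PosSemidef) : 0 ≤ (C * C * B).trace.re := by
  have h2 : (C * B * C).PosSemidef := by
    have := hB.conjTranspose_mul_mul_same C
    rwa [show Cᴴ = C from hC.isHermitian] at this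
  have htr : (C * C * B).trace = (C * B * C).trace := (Matrix.trace_mul_cycle C B C).symm
  rw [htr]
  exact aux_trace_re_nonneg h2

lemma aux_trace_mul_re_nonneg {d : ℕ} {A B : Matrix (Fin d) (Fin d) ℂ}
    (hA : A.PosSemidef) (hB : B.PosSemidef) : 0 ≤ (A * B).trace.re := by
  open scoped MatrixOrder in
  have h := aux_trace_sq_mul_re_nonneg (CFC.sqrt_nonneg A).posSemidef hB
  open scoped MatrixOrder in
  rwa [CFC.sqrt_mul_sqrt_self A hA.nonneg] at h

lemma aux_matPosPart_posSemidef {d : ℕ} {M : Matrix (Fin d) (Fin d) ℂ}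
    (hM : M.IsHermitian) : (matPosPart M).PosSemidef := by
  rw [matPosPart, dif_pos hM]
  have hd : (Matrix.diagonal (fun i => ((max (hM.eigenvalues i) 0 : ℝ) : ℂ))).PosSemidef :=
    Matrix.posSemidef_diagonal_iff.mpr fun i => by
      exact Complex.zero_le_real.mpr (le_max_right _ _)
  have := hd.mul_mul_conjTranspose_same (hM.eigenvectorUnitary : Matrix (Fin d) (Fin d) ℂ)
  simpa [Matrix.star_eq_conjTranspose] using this

lemma aux_matPosPart_mul {d : ℕ} {M : Matrix (Fin d) (Fin d) ℂ}
    (hM : M.IsHermitian) : matPosPart M * M = matPosPart M * matPosPart M := by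
  set U := (hM.eigenvectorUnitary : Matrix (Fin d) (Fin d) ℂ) with hU
  have hUU : star U * U = 1 := Matrix.mem_unitaryGroup_iff'.mp hM.eigenvectorUnitary.2
  set Dp := Matrix.diagonal (fun i => ((max (hM.eigenvalues i) 0 : ℝ) : ℂ)) with hDp
  set D := Matrix.diagonal (RCLike.ofReal ∘ hM.eigenvalues : Fin d → ℂ) with hD
  have hMeq : M = U * D * star U := hM.spectral_theorem
  have hPeq : matPosPart M = U * Dp * star U := by rw [matPosPart, dif_pos hM]
  have key : ∀ D1 D2 : Matrix (Fin d) (Fin d) ℂ,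
      (U * D1 * star U) * (U * D2 * star U) = U * (D1 * D2) * star U := by
    intro D1 D2
    calc (U * D1 * star U) * (U * D2 * star U)
        = U * D1 * (star U * U) * D2 * star U := by
          simp only [Matrix.mul_assoc]
      _ = U * (D1 * D2) * star U := by rw [hUU]; simp only [Matrix.mul_one, Matrix.mul_assoc]
  have hdd : Dp * D = Dp * Dp := by
    rw [hDp, hD, Matrix.diagonal_mul_diagonal, Matrix.diagonal_mul_diagonal]
    refine congrArg Matrix.diagonal (funext fun i => ?_)
    show ((max (hM.eigenvalues i) 0 : ℝ) : ℂ) * ((hM.eigenvalues i : ℝ) : ℂ)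
        = ((max (hM.eigenvalues i) 0 : ℝ) : ℂ) * ((max (hM.eigenvalues i) 0 : ℝ) : ℂ)
    rw [← Complex.ofReal_mul, ← Complex.ofReal_mul]
    congr 1
    rcases le_total (hM.eigenvalues i) 0 with h | h
    · simp [max_eq_right h]
    · rw [max_eq_left h]
  rw [hPeq, hMeq, key, key, hdd]

set_option maxHeartbeats 1000000 in
/-- Let `X, Y` be PD Hermitian and `P` PSD Hermitian with `P ⪰ X⁻¹`, and
`P' := P + Y^{-1/2}(I − Y^{1/2} P Y^{1/2})₊ Y^{-1/2}`. Then `‖P' − P‖_Y ≤ ‖Y − X‖_{X⁻¹}`,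
i.e. `Tr((P'−P)Y(P'−P)Y) ≤ Tr((Y−X)X⁻¹(Y−X)X⁻¹)`. Here `S` denotes the (unique) PD
square root `Y^{1/2}` of `Y`. -/
theorem stmt6 (d : ℕ) (X Y P S P' : Matrix (Fin d) (Fin d) ℂ)
    (hX : X.PosDef) (hY : Y.PosDef) (hP : P.PosSemidef)
    (hPX : (P - X⁻¹).PosSemidef)
    (hS : S.PosDef) (hSY : S * S = Y)
    (hP' : P' = P + S⁻¹ * matPosPart (1 - S * P * S) * S⁻¹) :
    ((P' - P) * Y * (P' - P) * Y).trace.re ≤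
      ((Y - X) * X⁻¹ * (Y - X) * X⁻¹).trace.re := by
  subst hSY
  have hSdet : IsUnit S.det := (Matrix.isUnit_iff_isUnit_det S).mp hS.isUnit
  have hXdet : IsUnit X.det := (Matrix.isUnit_iff_isUnit_det X).mp hX.isUnit
  have h1 : S⁻¹ * S = 1 := Matrix.nonsing_inv_mul S hSdet
  have h2 : S * S⁻¹ = 1 := Matrix.mul_nonsing_inv S hSdet
  have hX1 : X⁻¹ * X = 1 := Matrix.nonsing_inv_mul X hXdet
  have hX2 : X * X⁻¹ = 1 := Matrix.mul_nonsing_inv X hXdet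
  have hc1 : ∀ B : Matrix (Fin d) (Fin d) ℂ, S⁻¹ * (S * B) = B := fun B => by
    rw [← Matrix.mul_assoc, h1, Matrix.one_mul]
  have hc2 : ∀ B : Matrix (Fin d) (Fin d) ℂ, S * (S⁻¹ * B) = B := fun B => by
    rw [← Matrix.mul_assoc, h2, Matrix.one_mul]
  have hSH : Sᴴ = S := hS.isHermitian
  -- basic players
  set M : Matrix (Fin d) (Fin d) ℂ := 1 - S * P * S with hMdef
  have hM : M.IsHermitian := by
    have h' : (S * P * S).IsHermitian := by
      have := hP.mul_mul_conjTranspose_same S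
      rw [hSH] at this
      exact this.isHermitian
    exact Matrix.isHermitian_one.sub h'
  set A : Matrix (Fin d) (Fin d) ℂ := matPosPart M with hAdef
  have hA : A.PosSemidef := aux_matPosPart_posSemidef hM
  set K : Matrix (Fin d) (Fin d) ℂ := 1 - S * X⁻¹ * S with hKdef
  have hK : K.IsHermitian := by
    have h' : (S * X⁻¹ * S).IsHermitian := by
      have := Matrix.isHermitian_conjTranspose_mul_mul S hX.isHermitian.inv
      rwa [hSH] at this
    exact Matrix.isHermitian_one.sub h'
  -- trace of conjugated matrix
  have trace_conj : ∀ B : Matrix (Fin d) (Fin d) ℂ, (S⁻¹ * B * S).trace = B.trace := by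
    intro B
    rw [Matrix.trace_mul_comm, ← Matrix.mul_assoc, h2, Matrix.one_mul]
  -- LHS trace
  have hPP : P' - P = S⁻¹ * A * S⁻¹ := by rw [hP']; exact add_sub_cancel_left _ _
  have hLtr : ((P' - P) * (S * S) * (P' - P) * (S * S)).trace = (A * A).trace := by
    rw [hPP]
    have e1 : S⁻¹ * A * S⁻¹ * (S * S) * (S⁻¹ * A * S⁻¹) * (S * S)
        = S⁻¹ * (A * A) * S := by
      simp only [Matrix.mul_assoc, hc1, hc2]
    rw [e1, trace_conj]
  -- RHS trace equals trace (K*K)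
  have hW : K = -(S⁻¹ * ((S * S - X) * X⁻¹) * S) := by
    rw [hKdef]
    have : S⁻¹ * ((S * S - X) * X⁻¹) * S = S * X⁻¹ * S - 1 := by
      simp only [Matrix.sub_mul, Matrix.mul_sub, Matrix.mul_assoc, hc1, hc2, hX2, hX1,
        Matrix.mul_one, Matrix.one_mul, h1, h2]
    rw [this, neg_sub]
  have hRtr : ((S * S - X) * X⁻¹ * (S * S - X) * X⁻¹).trace = (K * K).trace := by
    have e2 : K * K = S⁻¹ * ((S * S - X) * X⁻¹ * ((S * S - X) * X⁻¹)) * S := by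
      rw [hW, neg_mul_neg]
      simp only [Matrix.mul_assoc, hc1, hc2]
    rw [e2, trace_conj, ← Matrix.mul_assoc]
  -- key inequalities
  have hAM : A * M = A * A := aux_matPosPart_mul hM
  have hKM : (K - M).PosSemidef := by
    have hKMeq : K - M = S * (P - X⁻¹) * Sᴴ := by
      rw [hSH, hKdef, hMdef]
      noncomm_ring
    rw [hKMeq]
    exact hPX.mul_mul_conjTranspose_same S
  have hineq1 : (A * A).trace.re ≤ (A * K).trace.re := by
    have h0 : 0 ≤ (A * (K - M)).trace.re := aux_trace_mul_re_nonneg hA hKM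
    have : A * (K - M) = A * K - A * A := by rw [Matrix.mul_sub, hAM]
    rw [this, Matrix.trace_sub, Complex.sub_re] at h0
    linarith
  have hineq2 : 0 ≤ ((A - K) * (A - K)).trace.re := by
    refine aux_trace_re_nonneg ?_
    have := Matrix.posSemidef_conjTranspose_mul_self (A - K)
    rwa [show (A - K)ᴴ = A - K from hA.isHermitian.sub hK] at this
  have hexp : ((A - K) * (A - K)).trace.re
      = (A * A).trace.re - 2 * (A * K).trace.re + (K * K).trace.re := by
    have : (A - K) * (A - K) = A * A - A * K - K * A + K * K := by
      noncomm_ring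
    rw [this, Matrix.trace_add, Matrix.trace_sub, Matrix.trace_sub,
      Matrix.trace_mul_comm K A]
    simp only [Complex.add_re, Complex.sub_re]
    ring
  rw [hLtr, hRtr]
  rw [hexp] at hineq2
  linarith
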